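/- For the recursively constructed multicast lower-bound instance M_𝒮 with congestion parameter C (even) and depth parameter D, every label induces a rooted tree in the graph G_𝒮, so M_𝒮 is a valid simultaneous multicast instance. -/

import Mathlib

/-- The graph induced by a label `χ`: edges carrying `χ` in their label set. -/
def labelGraph {V L : Type*} (lab : V → V → Finset L) (χ : L) : SimpleGraph V where
  Adj u v := u ≠ v ∧ (χ ∈ lab u v ∨ χ ∈ lab v u)
  symm := ⟨fun u v h => ⟨h.1.symm, h.2.symm⟩⟩
  loopless := ⟨fun v h => h.1 rfl⟩

/-- The vertices of the multicast tree of label `χ`: its root together with all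
vertices incident to an edge carrying `χ`. -/
def labelSupp {V L : Type*} (lab : V → V → Finset L) (root : L → V) (χ : L) : Set V :=
  {v | v = root χ ∨ ∃ u, (labelGraph lab χ).Adj v u}

/-- A store-and-forward schedule for a simultaneous multicast instance: in each
synchronous round at most one packet crosses each edge, packet `m_χ` (initially known
only to `root χ`) may only traverse edges of its tree (edges whose label set contains
`χ`), and nodes may copy packets. `knows t χ` is the set of vertices knowing `m_χ`
after `t` rounds, and `send t u v` is the packet sent from `u` to `v` in round `t+1`. -/
structure Schedule (V L : Type*) (lab : V → V → Finset L) (root : L → V) where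
  knows : ℕ → L → Set V
  send : ℕ → V → V → Option L
  init : ∀ χ, knows 0 χ = {root χ}
  send_mem : ∀ t u v χ, send t u v = some χ → χ ∈ lab u v ∧ u ∈ knows t χ
  one_per_edge : ∀ t u v, (send t u v).isSome → send t v u = none
  step : ∀ t χ, knows (t+1) χ = knows t χ ∪ {v | ∃ u, send t u v = some χ}

/-- A schedule has length at most `T` (solves the instance within `T` rounds) if
after `T` rounds every vertex of every multicast tree — in particular every leaf —
knows the corresponding packet. -/
def Schedule.Solves {V L : Type*} {lab : V → V → Finset L} {root : L → V}
    (S : Schedule V L lab root) (T : ℕ) : Prop :=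
  ∀ χ v, v ∈ labelSupp lab root χ → v ∈ S.knows T χ
section LowerBoundConstruction

variable {L : Type} [DecidableEq L]

open scoped Classical

/-- The ways of "guessing" delayed trees: for each adjacent pair
`(S (2i), S (2i+1))` of label sets, a choice of `C/2` labels from each. -/
def Choices (C m : ℕ) (S : Fin (2 * m) → Finset L) : Type :=
  { f : Fin m → Finset L × Finset L //
    ∀ i : Fin m,
      (f i).1 ⊆ S ⟨2 * i.1, by have := i.isLt; omega⟩ ∧ (f i).1.card = C / 2 ∧
      (f i).2 ⊆ S ⟨2 * i.1 + 1, by have := i.isLt; omega⟩ ∧ (f i).2.card = C / 2 }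

/-- The interleaved tuple `𝒮' ∈ I(𝒮)` corresponding to a choice. -/
def mergeS {C m : ℕ} {S : Fin (2 * m) → Finset L} (f : Choices C m S) :
    Fin m → Finset L := fun i => (f.1 i).1 ∪ (f.1 i).2

def reidx {d : ℕ} (S : Fin (2 ^ (d + 1)) → Finset L) : Fin (2 * 2 ^ d) → Finset L :=
  fun j => S ⟨j.1, by
    have h1 := j.isLt
    have h2 : 2 * 2 ^ d = 2 ^ (d + 1) := by rw [pow_succ, Nat.mul_comm]
    omega⟩

/-- Non-root vertices of the lower-bound instance `M_𝒮` (recursion level `d`,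
dilation `d+1`): for `d = 0` the single vertex `v`; for `d+1` the vertices `v_i`
(the identified roots of the sub-instances) together with, for each guess
`𝒮' ∈ I(𝒮)`, the non-root vertices of `M_𝒮'`. -/
def NRv (C : ℕ) : (d : ℕ) → (Fin (2 ^ d) → Finset L) → Type :=
  Nat.rec (motive := fun d => (Fin (2 ^ d) → Finset L) → Type)
    (fun _ => PUnit)
    (fun d ih S => Fin (2 ^ d) ⊕ (Σ f : Choices C (2 ^ d) (reidx S), ih (mergeS f)))

/-- All vertices of `M_𝒮`: the roots `r_j` together with the non-root vertices. -/
def Vx (C d : ℕ) (S : Fin (2 ^ d) → Finset L) : Type := Fin (2 ^ d) ⊕ NRv C d S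

/-- The labels carried by each edge of `G_𝒮` (`∅` meaning "no edge"): for `d = 0` a
single edge `(r, v)` carrying all labels of `S 0`; for `d + 1`, root edges
`(r_j, v_{⌊j/2⌋})` carrying `S j`, together with the edges of all sub-instances
`M_𝒮'`, `𝒮' ∈ I(𝒮)`, whose roots are identified with the vertices `v_i`. -/
noncomputable def labv (C : ℕ) : (d : ℕ) → (S : Fin (2 ^ d) → Finset L) →
    Vx C d S → Vx C d S → Finset L
  | 0, S, Sum.inl _, Sum.inr _ => S ⟨0, Nat.one_pos⟩
  | 0, S, Sum.inr _, Sum.inl _ => S ⟨0, Nat.one_pos⟩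
  | 0, _, _, _ => ∅
  | d + 1, S, u, v =>
    match u, v with
    | Sum.inl j, Sum.inr (Sum.inl i) => if j.1 / 2 = i.1 then S j else ∅
    | Sum.inr (Sum.inl i), Sum.inl j => if j.1 / 2 = i.1 then S j else ∅
    | Sum.inr (Sum.inl i), Sum.inr (Sum.inr ⟨f, y⟩) =>
        labv C d (mergeS f) (Sum.inl i) (Sum.inr y)
    | Sum.inr (Sum.inr ⟨f, y⟩), Sum.inr (Sum.inl i) =>
        labv C d (mergeS f) (Sum.inr y) (Sum.inl i)
    | Sum.inr (Sum.inr ⟨f, y⟩), Sum.inr (Sum.inr ⟨f', y'⟩) =>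
        if h : f = f' then labv C d (mergeS f') (Sum.inr (h ▸ y)) (Sum.inr y') else ∅
    | _, _ => ∅

/-- The root of the multicast tree of label `χ`: the root vertex `r_j` for the
(unique) `j` with `χ ∈ S j`. -/
noncomputable def rootV (C d : ℕ) (S : Fin (2 ^ d) → Finset L) (χ : L) : Vx C d S :=
  Sum.inl (if h : ∃ j, χ ∈ S j then h.choose else ⟨0, Nat.two_pow_pos d⟩)

end LowerBoundConstruction

section Aux
variable {L : Type} [DecidableEq L]
open scoped Classical

noncomputable def par (C : ℕ) : (d : ℕ) → (S : Fin (2 ^ d) → Finset L) → (χ : L) →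
    Vx C d S → Vx C d S
  | 0, _, _, _ => Sum.inl ⟨0, Nat.one_pos⟩
  | _ + 1, _, _, Sum.inl j => Sum.inl j
  | d + 1, S, χ, Sum.inr (Sum.inl _) => rootV C (d + 1) S χ
  | d + 1, S, χ, Sum.inr (Sum.inr ⟨f, y⟩) =>
      match par C d (mergeS f) χ (Sum.inr y) with
      | Sum.inl i => Sum.inr (Sum.inl i)
      | Sum.inr z => Sum.inr (Sum.inr ⟨f, z⟩)

noncomputable def ht (C : ℕ) : (d : ℕ) → (S : Fin (2 ^ d) → Finset L) → Vx C d S → ℕ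
  | 0, _, Sum.inl _ => 0
  | 0, _, Sum.inr _ => 1
  | _ + 1, _, Sum.inl _ => 0
  | _ + 1, _, Sum.inr (Sum.inl _) => 1
  | d + 1, _, Sum.inr (Sum.inr ⟨f, y⟩) => 1 + ht C d (mergeS f) (Sum.inr y)

end Aux

section Aux
variable {L : Type} [DecidableEq L]
open scoped Classical

lemma mem_mergeS {C m : ℕ} {S : Fin (2 * m) → Finset L} (f : Choices C m S)
    {i : Fin m} {l : L} (h : l ∈ mergeS f i) :
    ∃ j : Fin (2 * m), l ∈ S j ∧ j.1 / 2 = i.1 := by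
  rcases Finset.mem_union.mp h with h' | h'
  · exact ⟨⟨2 * i.1, by omega⟩, (f.2 i).1 h', by
      show 2 * i.1 / 2 = i.1; omega⟩
  · exact ⟨⟨2 * i.1 + 1, by omega⟩, (f.2 i).2.2.1 h', by
      show (2 * i.1 + 1) / 2 = i.1; omega⟩

lemma mem_labv (C : ℕ) : ∀ (d : ℕ) (S : Fin (2 ^ d) → Finset L) (u v : Vx C d S) (l : L),
    l ∈ labv C d S u v → ∃ i, l ∈ S i := by
  intro d
  induction d with
  | zero =>
    rintro S (j | y) (j' | y') l h <;>
      simp only [labv, Finset.notMem_empty] at h <;> exact ⟨_, h⟩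
  | succ d ih =>
    rintro S (j | (i | ⟨f, y⟩)) (j' | (i' | ⟨f', y'⟩)) l h <;>
      simp only [labv, Finset.notMem_empty] at h
    · split at h
      · exact ⟨_, h⟩
      · exact absurd h (Finset.notMem_empty l)
    · split at h
      · exact ⟨_, h⟩
      · exact absurd h (Finset.notMem_empty l)
    · obtain ⟨i'', hi⟩ := ih _ _ _ _ h
      obtain ⟨jj, hj, -⟩ := mem_mergeS f' hi
      exact ⟨_, hj⟩
    · obtain ⟨i'', hi⟩ := ih _ _ _ _ h
      obtain ⟨jj, hj, -⟩ := mem_mergeS f hi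
      exact ⟨_, hj⟩
    · split at h
      · obtain ⟨i'', hi⟩ := ih _ _ _ _ h
        obtain ⟨jj, hj, -⟩ := mem_mergeS f' hi
        exact ⟨_, hj⟩
      · exact absurd h (Finset.notMem_empty l)

lemma par_inl (C : ℕ) (d : ℕ) (S : Fin (2 ^ d) → Finset L) (χ : L) (j : Fin (2 ^ d)) :
    par C d S χ (Sum.inl j) = Sum.inl j := by
  cases d with
  | zero => simp only [par]; congr 1; omega
  | succ d => rfl

lemma ht_inl (C : ℕ) (d : ℕ) (S : Fin (2 ^ d) → Finset L) (j : Fin (2 ^ d)) :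
    ht C d S (Sum.inl j) = 0 := by
  cases d <;> rfl

lemma rootV_eq (C : ℕ) (d : ℕ) (S : Fin (2 ^ d) → Finset L) (χ : L)
    (hdisj : ∀ j j', j ≠ j' → Disjoint (S j) (S j')) {j : Fin (2 ^ d)} (hj : χ ∈ S j) :
    rootV C d S χ = Sum.inl j := by
  have h : ∃ j, χ ∈ S j := ⟨j, hj⟩
  unfold rootV
  rw [dif_pos h]
  congr 1
  by_contra hne
  exact (Finset.disjoint_left.mp (hdisj _ _ hne) h.choose_spec) hj

end Aux

section Main
variable {L : Type} [DecidableEq L]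
open scoped Classical

lemma chi_mem_of_par_inr (C : ℕ) : ∀ (d : ℕ) (S : Fin (2 ^ d) → Finset L) (χ : L)
    (y : NRv C d S) (i : Fin (2 ^ d)),
    par C d S χ (Sum.inr y) = Sum.inl i → (∃ i', χ ∈ S i') → χ ∈ S i := by
  intro d
  cases d with
  | zero =>
    intro S χ y i h hex
    simp only [par, Sum.inl.injEq] at h
    obtain ⟨i', hi'⟩ := hex
    have : i' = i := by omega
    exact this ▸ hi'
  | succ d =>
    rintro S χ (i'' | ⟨g, z⟩) i h hex
    · simp only [par] at h
      rw [rootV, dif_pos hex] at h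
      injection h with h
      subst h
      exact hex.choose_spec
    · rcases hp : par C d (mergeS g) χ (Sum.inr z) with ii | zz <;>
        simp only [par, hp] at h <;> exact absurd h (by simp)

lemma main_ind (C : ℕ) : ∀ (d : ℕ) (S : Fin (2 ^ d) → Finset L) (χ : L),
    (∀ j j', j ≠ j' → Disjoint (S j) (S j')) → ∀ (j₀ : Fin (2 ^ d)), χ ∈ S j₀ →
    (∀ u v, (labelGraph (labv C d S) χ).Adj u v →
        u = par C d S χ v ∨ v = par C d S χ u) ∧
    (∀ v, v ≠ Sum.inl j₀ → (∃ u, (labelGraph (labv C d S) χ).Adj v u) →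
        (labelGraph (labv C d S) χ).Adj v (par C d S χ v) ∧
        ht C d S (par C d S χ v) < ht C d S v) := by
  intro d
  induction d with
  | zero =>
    intro S χ hdisj j₀ hj₀
    constructor
    · rintro (j | y) (j' | y') ⟨hne, hor⟩
      · simp only [labv, Finset.notMem_empty, or_self] at hor
      · left; simp only [par]; congr 1; omega
      · right; simp only [par]; congr 1; omega
      · simp only [labv, Finset.notMem_empty, or_self] at hor
    · rintro (j | y) hne hadj
      · exact absurd (by congr 1; omega) hne
      · refine ⟨⟨by simp [par]; exact Sum.inr_ne_inl, Or.inl ?_⟩, by simp [par, ht]⟩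
        simp only [par, labv]
        convert hj₀ using 2
        omega
  | succ d ih =>
    intro S χ hdisj j₀ hj₀
    have hu : ∀ j, χ ∈ S j → j = j₀ := by
      intro j hj
      by_contra hne
      exact (Finset.disjoint_left.mp (hdisj _ _ hne) hj) hj₀
    have hj₀lt : j₀.1 / 2 < 2 ^ d := by
      have := j₀.isLt
      have h2 : 2 ^ (d + 1) = 2 * 2 ^ d := by ring
      omega
    have hpow : 2 * 2 ^ d = 2 ^ (d + 1) := by ring
    set i₀ : Fin (2 ^ d) := ⟨j₀.1 / 2, hj₀lt⟩ with hi₀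
    have subdisj : ∀ (f : Choices C (2 ^ d) (reidx S)) (i i' : Fin (2 ^ d)), i ≠ i' →
        Disjoint (mergeS f i) (mergeS f i') := by
      intro f i i' hne
      rw [Finset.disjoint_left]
      intro l hl hl'
      obtain ⟨j, hj, hji⟩ := mem_mergeS f hl
      obtain ⟨j', hj', hji'⟩ := mem_mergeS f hl'
      have hjj : j.1 ≠ j'.1 := by
        intro h
        exact hne (Fin.ext (by omega))
      have : (⟨j.1, hpow ▸ j.isLt⟩ : Fin (2 ^ (d+1))) ≠ ⟨j'.1, hpow ▸ j'.isLt⟩ := by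
        simp [Fin.ext_iff, hjj]
      exact (Finset.disjoint_left.mp (hdisj _ _ this) hj) hj'
    have hforce : ∀ (f : Choices C (2 ^ d) (reidx S)) (i : Fin (2 ^ d)),
        χ ∈ mergeS f i → i = i₀ := by
      intro f i hi
      obtain ⟨j, hj, hji⟩ := mem_mergeS f hi
      have : (⟨j.1, hpow ▸ j.isLt⟩ : Fin (2 ^ (d+1))) = j₀ := hu _ hj
      refine Fin.ext ?_
      simp only [hi₀]
      have : j.1 = j₀.1 := by rw [← this]
      omega
    have hrootV : rootV C (d + 1) S χ = Sum.inl j₀ := rootV_eq C (d+1) S χ hdisj hj₀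
    constructor
    · -- every edge is a parent edge
      rintro (j | (i | ⟨f, y⟩)) (j' | (i' | ⟨f', y'⟩)) ⟨hne, hor⟩ <;>
        simp only [labv, Finset.notMem_empty, or_self] at hor
      · -- inl j -- inr inl i'
        split at hor
        · left
          rw [hu _ hor]
          simp only [par]
          exact hrootV.symm
        · exact absurd hor (Finset.notMem_empty χ)
      · -- inr inl i -- inl j'
        split at hor
        · right
          rw [hu _ hor]
          simp only [par]
          exact hrootV.symm
        · exact absurd hor (Finset.notMem_empty χ)
      · -- inr inl i -- inr inr ⟨f', y'⟩
        have hwit : ∃ ii, χ ∈ mergeS f' ii := by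
          rcases hor with h | h
          · exact ⟨_, (mem_labv C d _ _ _ _ h).choose_spec⟩
          · exact ⟨_, (mem_labv C d _ _ _ _ h).choose_spec⟩
        obtain ⟨ii, hii⟩ := hwit
        have hχsub : χ ∈ mergeS f' i₀ := hforce f' ii hii ▸ hii
        have hsub : (labelGraph (labv C d (mergeS f')) χ).Adj (Sum.inl i) (Sum.inr y') :=
          ⟨Sum.inl_ne_inr, hor⟩
        rcases (ih (mergeS f') χ (subdisj f') i₀ hχsub).1 _ _ hsub with hp | hp
        · left
          simp only [par]
          rw [← hp]
        · rw [par_inl] at hp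
          exact absurd hp.symm (by simp)
      · -- inr inr ⟨f, y⟩ -- inr inl i'
        have hwit : ∃ ii, χ ∈ mergeS f ii := by
          rcases hor with h | h
          · exact ⟨_, (mem_labv C d _ _ _ _ h).choose_spec⟩
          · exact ⟨_, (mem_labv C d _ _ _ _ h).choose_spec⟩
        obtain ⟨ii, hii⟩ := hwit
        have hχsub : χ ∈ mergeS f i₀ := hforce f ii hii ▸ hii
        have hsub : (labelGraph (labv C d (mergeS f)) χ).Adj (Sum.inl i') (Sum.inr y) :=
          ⟨Sum.inl_ne_inr, hor.symm⟩
        rcases (ih (mergeS f) χ (subdisj f) i₀ hχsub).1 _ _ hsub with hp | hp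
        · right
          simp only [par]
          rw [← hp]
        · rw [par_inl] at hp
          exact absurd hp.symm (by simp)
      · -- inr inr ⟨f, y⟩ -- inr inr ⟨f', y'⟩
        by_cases hf : f = f'
        · subst hf
          rw [dif_pos rfl, dif_pos rfl] at hor
          have hyy : y ≠ y' := by
            rintro rfl
            exact hne rfl
          have hwit : ∃ ii, χ ∈ mergeS f ii := by
            rcases hor with h | h
            · exact ⟨_, (mem_labv C d _ _ _ _ h).choose_spec⟩
            · exact ⟨_, (mem_labv C d _ _ _ _ h).choose_spec⟩
          obtain ⟨ii, hii⟩ := hwit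
          have hχsub : χ ∈ mergeS f i₀ := hforce f ii hii ▸ hii
          have hsub : (labelGraph (labv C d (mergeS f)) χ).Adj (Sum.inr y) (Sum.inr y') :=
            ⟨fun hc => hyy (Sum.inr_injective hc), hor⟩
          rcases (ih (mergeS f) χ (subdisj f) i₀ hχsub).1 _ _ hsub with hp | hp
          · left
            simp only [par]
            rw [← hp]
          · right
            simp only [par]
            rw [← hp]
        · rw [dif_neg hf, dif_neg (Ne.symm hf)] at hor
          simp at hor
    · -- every non-root supported vertex points to its parent
      rintro (j | (i | ⟨f, y⟩)) hvne hadj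
      · -- v = inl j : must be the root, contradiction
        exfalso
        obtain ⟨u, hne', hor⟩ := hadj
        rcases u with j' | (i' | ⟨f', y'⟩) <;>
          simp only [labv, Finset.notMem_empty, or_self] at hor
        · split at hor
          · exact hvne (by rw [hu _ hor])
          · exact absurd hor (Finset.notMem_empty χ)
      · -- v = inr (inl i)
        have hii₀ : i = i₀ := by
          obtain ⟨u, hne', hor⟩ := hadj
          rcases u with j' | (i' | ⟨f', y'⟩) <;>
            simp only [labv, Finset.notMem_empty, or_self] at hor
          · split at hor
            · rename_i hsplit
              rw [hu _ hor] at hsplit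
              exact Fin.ext hsplit.symm
            · exact absurd hor (Finset.notMem_empty χ)
          · have hwit : ∃ ii, χ ∈ mergeS f' ii := by
              rcases hor with h | h
              · exact ⟨_, (mem_labv C d _ _ _ _ h).choose_spec⟩
              · exact ⟨_, (mem_labv C d _ _ _ _ h).choose_spec⟩
            obtain ⟨ii, hii⟩ := hwit
            have hχsub : χ ∈ mergeS f' i₀ := hforce f' ii hii ▸ hii
            have hsub : (labelGraph (labv C d (mergeS f')) χ).Adj (Sum.inl i) (Sum.inr y') :=
              ⟨Sum.inl_ne_inr, hor⟩
            rcases (ih (mergeS f') χ (subdisj f') i₀ hχsub).1 _ _ hsub with hp | hp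
            · exact hforce f' i (chi_mem_of_par_inr C d _ χ y' i hp.symm ⟨_, hχsub⟩)
            · rw [par_inl] at hp
              exact absurd hp.symm (by simp)
        subst hii₀
        refine ⟨⟨by simp [par, hrootV]; exact Sum.inr_ne_inl, Or.inr ?_⟩, ?_⟩
        · simp only [par, hrootV, labv]
          split_ifs with hcn
          · exact hj₀
          · exact absurd (by trivial) hcn
        · simp [par, hrootV, ht, ht_inl]
      · -- v = inr (inr ⟨f, y⟩)
        obtain ⟨u, hne', hor⟩ := hadj
        have hcore : (∃ ii, χ ∈ mergeS f ii) ∧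
            ∃ u', (labelGraph (labv C d (mergeS f)) χ).Adj (Sum.inr y) u' := by
          rcases u with j' | (i' | ⟨f', y'⟩) <;>
            simp only [labv, Finset.notMem_empty, or_self] at hor
          · refine ⟨?_, Sum.inl i', ⟨Sum.inr_ne_inl, hor⟩⟩
            rcases hor with h | h
            · exact ⟨_, (mem_labv C d _ _ _ _ h).choose_spec⟩
            · exact ⟨_, (mem_labv C d _ _ _ _ h).choose_spec⟩
          · by_cases hf : f = f'
            · subst hf
              rw [dif_pos rfl, dif_pos rfl] at hor
              have hyy : y ≠ y' := by
                rintro rfl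
                exact hne' rfl
              refine ⟨?_, Sum.inr y', ⟨fun hc => hyy (Sum.inr_injective hc), hor⟩⟩
              rcases hor with h | h
              · exact ⟨_, (mem_labv C d _ _ _ _ h).choose_spec⟩
              · exact ⟨_, (mem_labv C d _ _ _ _ h).choose_spec⟩
            · rw [dif_neg hf, dif_neg (Ne.symm hf)] at hor
              simp at hor
        obtain ⟨⟨ii, hii⟩, hex⟩ := hcore
        have hχsub : χ ∈ mergeS f i₀ := hforce f ii hii ▸ hii
        obtain ⟨hadj', hht'⟩ := (ih (mergeS f) χ (subdisj f) i₀ hχsub).2 (Sum.inr y)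
          (by simp) hex
        obtain ⟨hne'', hor''⟩ := hadj'
        rcases hp : par C d (mergeS f) χ (Sum.inr y) with zi | zz
        · rw [hp] at hor''
          refine ⟨⟨?_, ?_⟩, ?_⟩
          · simp only [par, hp]
            intro hc
            have hc' : (Sum.inr ⟨f, y⟩ : Fin (2 ^ d) ⊕
                (Σ g : Choices C (2 ^ d) (reidx S), NRv C d (mergeS g))) = Sum.inl zi :=
              Sum.inr_injective hc
            exact Sum.inr_ne_inl hc'
          · simp only [par, hp, labv]
            exact hor''
          · rw [hp, ht_inl] at hht'
            simp only [par, hp, ht]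
            omega
        · rw [hp] at hor'' hne''
          refine ⟨⟨?_, ?_⟩, ?_⟩
          · simp only [par, hp]
            intro hc
            have hc' : (Sum.inr ⟨f, y⟩ : Fin (2 ^ d) ⊕
                (Σ g : Choices C (2 ^ d) (reidx S), NRv C d (mergeS g))) = Sum.inr ⟨f, zz⟩ :=
              Sum.inr_injective hc
            have hc'' : (⟨f, y⟩ : Σ g : Choices C (2 ^ d) (reidx S), NRv C d (mergeS g)) =
                ⟨f, zz⟩ := Sum.inr_injective hc'
            obtain ⟨-, h2⟩ := Sigma.mk.inj_iff.mp hc''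
            exact hne'' (congrArg Sum.inr (eq_of_heq h2))
          · simp only [par, hp, labv, dif_pos rfl]
            exact hor''
          · rw [hp] at hht'
            simp only [par, hp, ht]
            omega
end Main

open SimpleGraph in
lemma cycle_two_nbrs {W : Type*} {G : SimpleGraph W} {m : W} (c : G.Walk m m)
    (hc : c.IsCycle) :
    ∃ a x, a ≠ x ∧ G.Adj m a ∧ G.Adj m x ∧ a ∈ c.support ∧ x ∈ c.support := by
  cases c with
  | nil => exact absurd rfl hc.ne_nil
  | @cons _ a _ h1 p =>
    rw [Walk.cons_isCycle_iff] at hc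
    obtain ⟨hpath, hem⟩ := hc
    have ham : a ≠ m := fun h => (h ▸ h1).ne rfl
    cases p with
    | nil => exact absurd rfl ham
    | @cons _ b _ h2 p2 =>
      obtain ⟨x, q, h', hqc⟩ := Walk.exists_cons_eq_concat h2 p2
      have hxm : s(x, m) ∈ (Walk.cons h2 p2).edges := by
        rw [hqc, Walk.edges_concat]; simp
      have hxa : x ≠ a := by
        rintro rfl
        exact hem (Sym2.eq_swap ▸ hxm)
      refine ⟨a, x, hxa.symm, h1, h'.symm, ?_, ?_⟩
      · simp
      · refine List.mem_cons_of_mem _ ?_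
        rw [hqc, Walk.concat_eq_append]
        simp

open SimpleGraph in
lemma isTree_of_parent {W : Type*} {G : SimpleGraph W} (r : W) (par : W → W) (ht : W → ℕ)
    (hpr : par r = r)
    (hadj : ∀ v, v ≠ r → G.Adj v (par v))
    (hht : ∀ v, v ≠ r → ht (par v) < ht v)
    (hedge : ∀ u v, G.Adj u v → u = par v ∨ v = par u) : G.IsTree := by
  classical
  have hdown : ∀ u v, G.Adj u v → ht v ≤ ht u → v = par u := by
    intro u v h hle
    rcases hedge u v h with h1 | h1
    · rcases eq_or_ne v r with rfl | hv
      · exact absurd (h1.trans hpr) h.ne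
      · exact absurd hle (not_le.mpr (h1 ▸ hht v hv))
    · exact h1
  constructor
  · rw [connected_iff]
    refine ⟨?_, ⟨r⟩⟩
    have key : ∀ n v, ht v ≤ n → G.Reachable v r := by
      intro n
      induction n with
      | zero =>
        intro v hv
        rcases eq_or_ne v r with rfl | hv'
        · exact Reachable.refl _
        · exact absurd (Nat.lt_of_lt_of_le (hht v hv') hv) (Nat.not_lt_zero _)
      | succ n ih =>
        intro v hv
        rcases eq_or_ne v r with rfl | hv'
        · exact Reachable.refl _
        · exact ((hadj v hv').reachable).trans
            (ih (par v) (by have := hht v hv'; omega))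
    intro u v
    exact (key (ht u) u le_rfl).trans (key (ht v) v le_rfl).symm
  · intro v c hc
    obtain ⟨m, hm, hmax⟩ := Finset.exists_max_image c.support.toFinset ht
      ⟨v, by simp [Walk.start_mem_support]⟩
    simp only [List.mem_toFinset] at hm
    have hmax' : ∀ a ∈ c.support, ht a ≤ ht m := fun a ha =>
      hmax a (List.mem_toFinset.mpr ha)
    have hsub : ∀ y, y ∈ (c.rotate m hm).support → y ∈ c.support := by
      intro y hy
      rw [Walk.support_eq_cons (c.rotate m hm)] at hy
      rcases List.mem_cons.mp hy with rfl | hy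
      · exact hm
      · have := (Walk.support_rotate c m hm).mem_iff.mp hy
        rw [Walk.support_eq_cons c]
        exact List.mem_cons_of_mem _ this
    obtain ⟨a, x, hax, hma, hmx, has, hxs⟩ := cycle_two_nbrs (c.rotate m hm) (hc.rotate hm)
    have h1' : a = par m := hdown m a hma (hmax' a (hsub a has))
    have h2' : x = par m := hdown m x hmx (hmax' x (hsub x hxs))
    exact hax (h1'.trans h2'.symm)

/-- For the recursively constructed multicast lower-bound instance
`M_𝒮` with congestion parameter `C` (even, positive) and recursion depth `d`
(dilation `D = d + 1`), where `𝒮` partitions `C · 2^d` distinct labels into sets of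
size `C`, every label `χ` induces a rooted tree in `G_𝒮`: the subgraph of edges
carrying `χ`, restricted to its vertices (which include `χ`'s root), is a tree.
Hence `M_𝒮` is a valid simultaneous multicast instance. -/
theorem lower_bound_instance_labels_induce_trees
    {L : Type} [DecidableEq L] (C d : ℕ) (hCeven : Even C) (hCpos : 0 < C)
    (S : Fin (2 ^ d) → Finset L)
    (hcard : ∀ j, (S j).card = C)
    (hdisj : ∀ j j', j ≠ j' → Disjoint (S j) (S j'))
    (χ : L) (hχ : ∃ j, χ ∈ S j) :
    rootV C d S χ ∈ labelSupp (labv C d S) (rootV C d S) χ ∧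
    ((labelGraph (labv C d S) χ).induce
        (labelSupp (labv C d S) (rootV C d S) χ)).IsTree := by
  classical
  obtain ⟨j₀, hj₀⟩ := hχ
  have hroot : rootV C d S χ = Sum.inl j₀ := rootV_eq C d S χ hdisj hj₀
  obtain ⟨hM1, hM2⟩ := main_ind C d S χ hdisj j₀ hj₀
  set G := labelGraph (labv C d S) χ with hG
  set supp := labelSupp (labv C d S) (rootV C d S) χ with hsupp
  refine ⟨Or.inl rfl, ?_⟩
  have hmem : ∀ v, v ∈ supp → par C d S χ v ∈ supp := by
    intro v hv
    by_cases hvr : v = rootV C d S χ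
    · subst hvr
      rw [hroot, par_inl, ← hroot]
      exact Or.inl rfl
    · rcases hv with hv | hv
      · exact absurd hv hvr
      · have := (hM2 v (by rw [← hroot]; exact hvr) hv).1
        exact Or.inr ⟨v, this.symm⟩
  refine isTree_of_parent (G := G.induce supp) ⟨rootV C d S χ, Or.inl rfl⟩
    (fun w => ⟨par C d S χ w.1, hmem _ w.2⟩) (fun w => ht C d S w.1) ?_ ?_ ?_ ?_
  · refine Subtype.ext ?_
    simp only
    rw [hroot, par_inl]
  · rintro ⟨v, hv⟩ hne
    have hv' : v ≠ rootV C d S χ := fun h => hne (Subtype.ext h)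
    rcases hv with hv | hv
    · exact absurd hv hv'
    · exact (hM2 v (by rw [← hroot]; exact hv') hv).1
  · rintro ⟨v, hv⟩ hne
    have hv' : v ≠ rootV C d S χ := fun h => hne (Subtype.ext h)
    rcases hv with hv | hv
    · exact absurd hv hv'
    · exact (hM2 v (by rw [← hroot]; exact hv') hv).2
  · rintro ⟨u, hu⟩ ⟨v, hv⟩ hadj
    have : G.Adj u v := hadj
    rcases hM1 u v this with h | h
    · exact Or.inl (Subtype.ext h)
    · exact Or.inr (Subtype.ext h)
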